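/- Let n ≥ d ≥ 1 and let f = Σ_{I ⊆ [n], |I| = d} f_I ∏_{i ∈ I} x_i be a square-free (multilinear) homogeneous polynomial of degree d with real coefficients, and let r ≥ d be an integer. Then f_{Δ(n,r)} − f_min^{(r−d)} ≤ (r^d / r^{(d)} − 1) (f̄ − f̲). -/

import Mathlib

open Finset

noncomputable section

/-- Falling factorial `t^(d) = t (t-1) ⋯ (t-d+1)`. -/
def fall (t : ℝ) : ℕ → ℝ
  | 0 => 1
  | d + 1 => fall t d * (t - (d : ℝ))

/-- The regular grid `Δ(n,r) = {x ∈ Δ_n : r·x ∈ ℕ^n}`. -/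
def regularGrid (n r : ℕ) : Set (Fin n → ℝ) :=
  {x ∈ stdSimplex ℝ (Fin n) | ∀ i, ∃ k : ℕ, (r : ℝ) * x i = (k : ℝ)}

/-- `f_{Δ(n,r)}`, the minimum of `f` over the regular grid. -/
def minGrid (n r : ℕ) (f : (Fin n → ℝ) → ℝ) : ℝ :=
  sInf (f '' regularGrid n r)

/-- `f̲`, the minimum of `f` over the standard simplex. -/
def minSimplex (n : ℕ) (f : (Fin n → ℝ) → ℝ) : ℝ :=
  sInf (f '' stdSimplex ℝ (Fin n))

/-- `f̄`, the maximum of `f` over the standard simplex. -/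
def maxSimplex (n : ℕ) (f : (Fin n → ℝ) → ℝ) : ℝ :=
  sSup (f '' stdSimplex ℝ (Fin n))

/-- The square-free (multilinear) polynomial `f = Σ_{I ⊆ [n], |I| = d} f_I Π_{i ∈ I} x_i`. -/
def sqfreePoly (n d : ℕ) (c : Finset (Fin n) → ℝ) (x : Fin n → ℝ) : ℝ :=
  ∑ I ∈ Finset.univ.powersetCard d, c I * ∏ i ∈ I, x i

/-- The Pólya-type lower bound `f_min^{(r-d)} = min_{α ∈ I(n,r)} Σ_β f_β α^{(β)} / r^{(d)}`
spelled out for the square-free polynomial `sqfreePoly` (here `α^{(β)} = Π_{i ∈ I} α_i`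
when `β` is the indicator vector of `I`). -/
def sqfreePolya (n d r : ℕ) (c : Finset (Fin n) → ℝ) : ℝ :=
  sInf ((fun α : Fin n → ℕ =>
      (∑ I ∈ Finset.univ.powersetCard d, c I * ∏ i ∈ I, ((α i : ℕ) : ℝ)) / fall (r : ℝ) d) ''
    {α : Fin n → ℕ | ∑ i, α i = r})
open Pointwise

lemma fall_pos_le {r d : ℕ} (h : d ≤ r) : 0 < fall (r : ℝ) d ∧ fall (r : ℝ) d ≤ (r : ℝ) ^ d := by
  induction d with
  | zero => simp [fall]
  | succ k ih =>
    obtain ⟨h1, h2⟩ := ih (le_of_lt (Nat.lt_of_succ_le h))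
    have hk : (k : ℝ) < r := by exact_mod_cast Nat.lt_of_succ_le h
    constructor
    · exact mul_pos h1 (by linarith)
    · calc fall (r:ℝ) k * ((r:ℝ) - k) ≤ (r:ℝ)^k * (r:ℝ) := by
            apply mul_le_mul h2 (by linarith) (by linarith) (by positivity)
          _ = (r:ℝ)^(k+1) := by ring

lemma grid_eq (n r : ℕ) (hr : 1 ≤ r) :
    regularGrid n r = (fun (α : Fin n → ℕ) i => (α i : ℝ) / r) '' {α | ∑ i, α i = r} := by
  have hr0 : (r : ℝ) ≠ 0 := by positivity
  ext x
  constructor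
  · rintro ⟨⟨hpos, hsum⟩, hk⟩
    choose k hk using hk
    refine ⟨k, ?_, ?_⟩
    · have h1 : (((∑ i, k i : ℕ)) : ℝ) = (r : ℝ) := by
        push_cast
        calc ∑ i, ((k i : ℕ) : ℝ) = ∑ i, (r:ℝ) * x i :=
              Finset.sum_congr rfl fun i _ => (hk i).symm
          _ = r := by rw [← Finset.mul_sum, hsum, mul_one]
      exact_mod_cast h1
    · funext i
      field_simp [← hk i]
      exact (hk i).symm
  · rintro ⟨α, hα, rfl⟩
    refine ⟨⟨fun i => by positivity, ?_⟩, fun i => ⟨α i, by field_simp⟩⟩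
    rw [← Finset.sum_div]
    rw [show ∑ i, ((α i : ℝ)) = ((∑ i, α i : ℕ) : ℝ) by push_cast; ring, hα]
    field_simp

lemma sqfree_eval (n d r : ℕ) (c : Finset (Fin n) → ℝ) (α : Fin n → ℕ) (hr : 1 ≤ r) :
    sqfreePoly n d c (fun i => (α i : ℝ) / r) =
      (∑ I ∈ Finset.univ.powersetCard d, c I * ∏ i ∈ I, ((α i : ℕ) : ℝ)) / (r : ℝ) ^ d := by
  rw [sqfreePoly, Finset.sum_div]
  apply Finset.sum_congr rfl
  intro I hI
  have hcard : I.card = d := (Finset.mem_powersetCard.mp hI).2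
  rw [Finset.prod_div_distrib, Finset.prod_const, hcard, mul_div_assoc]

lemma continuous_sqfree (n d : ℕ) (c : Finset (Fin n) → ℝ) : Continuous (sqfreePoly n d c) := by
  apply continuous_finset_sum
  intro I _
  exact continuous_const.mul (continuous_finset_prod _ (fun i _ => continuous_apply i))

lemma polya_eq (n d r : ℕ) (c : Finset (Fin n) → ℝ) (hr : 1 ≤ r) (hdr : d ≤ r) :
    sqfreePolya n d r c = ((r : ℝ) ^ d / fall (r : ℝ) d) * minGrid n r (sqfreePoly n d c) := by
  have hf := fall_pos_le (r := r) (d := d) hdr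
  have hf0 : fall (r : ℝ) d ≠ 0 := ne_of_gt hf.1
  have hr0 : (r : ℝ) ≠ 0 := by positivity
  set lam : ℝ := (r : ℝ) ^ d / fall (r : ℝ) d with hlam
  have hlampos : 0 ≤ lam := div_nonneg (by positivity) hf.1.le
  rw [sqfreePolya, minGrid, grid_eq n r hr, Set.image_image]
  rw [show (fun (α : Fin n → ℕ) =>
      (∑ I ∈ Finset.univ.powersetCard d, c I * ∏ i ∈ I, ((α i : ℕ) : ℝ)) / fall (r : ℝ) d)
      = fun α => lam * sqfreePoly n d c (fun i => (α i : ℝ) / r) by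
    funext α
    rw [sqfree_eval n d r c α hr, hlam]
    field_simp]
  rw [show (fun (α : Fin n → ℕ) => lam * sqfreePoly n d c (fun i => (α i : ℝ) / r))
      = (fun y => lam * y) ∘ (fun α => sqfreePoly n d c (fun i => (α i : ℝ) / r)) from rfl]
  rw [Set.image_comp, show ((fun y => lam * y) ''
      ((fun (α : Fin n → ℕ) => sqfreePoly n d c (fun i => (α i : ℝ) / r)) '' {α | ∑ i, α i = r}))
      = lam • ((fun (α : Fin n → ℕ) => sqfreePoly n d c (fun i => (α i : ℝ) / r)) ''
        {α | ∑ i, α i = r}) by rw [← Set.image_smul]; simp [smul_eq_mul]]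
  rw [Real.sInf_smul_of_nonneg hlampos, smul_eq_mul]
/-- for a square-free `f` of degree `d`, `1 ≤ d ≤ n` and `r ≥ d`,
`f_{Δ(n,r)} − f_min^{(r−d)} ≤ (r^d/r^{(d)} − 1)(f̄ − f̲)`. -/
theorem statement9 (n d r : ℕ) (hd : 1 ≤ d) (hdn : d ≤ n) (hr : d ≤ r)
    (c : Finset (Fin n) → ℝ) :
    minGrid n r (sqfreePoly n d c) - sqfreePolya n d r c ≤
      ((r : ℝ) ^ d / fall (r : ℝ) d - 1) *
        (maxSimplex n (sqfreePoly n d c) - minSimplex n (sqfreePoly n d c)) := by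
  have hr1 : 1 ≤ r := le_trans hd hr
  have hn : 0 < n := lt_of_lt_of_le hd hdn
  have hf := fall_pos_le (r := r) (d := d) hr
  set f := sqfreePoly n d c with hfdef
  set lam : ℝ := (r : ℝ) ^ d / fall (r : ℝ) d with hlam
  have hlam1 : 1 ≤ lam := (one_le_div hf.1).mpr hf.2
  have hK : IsCompact (f '' stdSimplex ℝ (Fin n)) :=
    (isCompact_stdSimplex ℝ (Fin n)).image (continuous_sqfree n d c)
  -- the grid is nonempty
  set i0 : Fin n := ⟨0, hn⟩ with hi0
  set α0 : Fin n → ℕ := fun i => if i = i0 then r else 0 with hα0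
  have hα0mem : α0 ∈ {α : Fin n → ℕ | ∑ i, α i = r} := by
    simp [hα0, Finset.sum_ite_eq']
  have hx0 : (fun i => (α0 i : ℝ) / r) ∈ regularGrid n r := by
    rw [grid_eq n r hr1]
    exact ⟨α0, hα0mem, rfl⟩
  have hgridsub : regularGrid n r ⊆ stdSimplex ℝ (Fin n) := fun x hx => hx.1
  have hLm : minSimplex n f ≤ minGrid n r f :=
    csInf_le_csInf hK.bddBelow ⟨_, Set.mem_image_of_mem f hx0⟩
      (Set.image_mono hgridsub)
  rw [polya_eq n d r c hr1 hr, ← hfdef, ← hlam]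
  rcases eq_or_lt_of_le hd with hd1 | hd2
  · -- d = 1 : lam = 1
    have : fall (r : ℝ) 1 = (r : ℝ) := by simp [fall]
    have hlameq : lam = 1 := by
      rw [hlam, ← hd1, pow_one, this, div_self (by positivity)]
    rw [hlameq]
    ring_nf
    linarith
  · -- d ≥ 2 : maxSimplex ≥ 0 since f vanishes at a vertex
    have he : (fun i => if i = i0 then (1:ℝ) else 0) ∈ stdSimplex ℝ (Fin n) := by
      constructor
      · intro i; dsimp only; split <;> norm_num
      · simp [Finset.sum_ite_eq']
    have hfe : f (fun i => if i = i0 then (1:ℝ) else 0) = 0 := by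
      rw [hfdef, sqfreePoly]
      apply Finset.sum_eq_zero
      intro I hI
      have hcard : I.card = d := (Finset.mem_powersetCard.mp hI).2
      obtain ⟨j, hjI, hjne⟩ :=
        Finset.exists_mem_ne (by omega : 1 < I.card) i0
      rw [Finset.prod_eq_zero hjI (by simp [hjne] : (if j = i0 then (1:ℝ) else 0) = 0), mul_zero]
    have hM0 : 0 ≤ maxSimplex n f := by
      rw [← hfe]
      exact le_csSup hK.bddAbove (Set.mem_image_of_mem f he)
    nlinarith [mul_nonneg (sub_nonneg.2 hlam1)
      (show (0:ℝ) ≤ maxSimplex n f + (minGrid n r f - minSimplex n f) by linarith)]
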